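/- arXiv:1702.01337 — 2 statements merged into one kernel-verified Lean document; each statement's English description precedes it below -/
import Mathlib

section
/- Let i : B → A be a k-linear X-functor from a diagonal k-linear category B to a k-linear category A. Then there is an adjoint pair of functors (F, G) between the category D_k(X)_B of diagonal right B-modules and the category Desc_B(A) of descent data for i, where F(N)_{xy} = N_x ⊗_{B_x} A_{xy} with right A-action (n ⊗ a)b = n ⊗ ab and descent map σ_{xy}(n ⊗ a) = n ⊗ 1_x ⊗ a, where G(M)_x = {m ∈ M_{xx} | σ_{xx}(m) = m ⊗_{B_x} 1_x}, and where the unit is η^N_x : N_x → GF(N)_x, n ↦ n ⊗_{B_x} 1_x, and the counit is ε^M_{xy} : G(M)_x ⊗_{B_x} A_{xy} → M_{xy}, m ⊗ a ↦ ma. -/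
open TensorProduct BigOperators
noncomputable section
namespace Paper
variable (k : Type) [CommRing k]

-- [CORE assumed]
structure KCat (X : Type) where
  M : X → X → Type
  [acg : ∀ x y, AddCommGroup (M x y)]
  [mod : ∀ x y, Module k (M x y)]
  mul : ∀ {x y z : X}, M x y → M y z → M x z
  one : ∀ x : X, M x x
  add_mul : ∀ {x y z : X} (a a' : M x y) (b : M y z), mul (a + a') b = mul a b + mul a' b
  smul_mul : ∀ {x y z : X} (c : k) (a : M x y) (b : M y z), mul (c • a) b = c • mul a b
  mul_add : ∀ {x y z : X} (a : M x y) (b b' : M y z), mul a (b + b') = mul a b + mul a b'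
  mul_smul : ∀ {x y z : X} (c : k) (a : M x y) (b : M y z), mul a (c • b) = c • mul a b
  mul_assoc : ∀ {x y z w : X} (a : M x y) (b : M y z) (c : M z w),
    mul (mul a b) c = mul a (mul b c)
  one_mul : ∀ {x y : X} (a : M x y), mul (one x) a = a
  mul_one : ∀ {x y : X} (a : M x y), mul a (one y) = a
attribute [instance] KCat.acg KCat.mod
variable {k}
def KCat.mulLin {X : Type} (A : KCat k X) (x y z : X) :
    A.M x y →ₗ[k] A.M y z →ₗ[k] A.M x z :=
  LinearMap.mk₂ k A.mul A.add_mul A.smul_mul A.mul_add A.mul_smul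
@[simp] theorem KCat.mulLin_apply {X : Type} (A : KCat k X) (x y z : X)
    (a : A.M x y) (b : A.M y z) : A.mulLin x y z a b = A.mul a b := rfl
variable (k)
def relSub {S M N : Type} [AddCommGroup M] [Module k M] [AddCommGroup N] [Module k N]
    (ρ : M → S → M) (lam : S → N → N) : Submodule k (M ⊗[k] N) :=
  Submodule.span k {t | ∃ m b n, t = ρ m b ⊗ₜ[k] n - m ⊗ₜ[k] lam b n}
abbrev BT {S M N : Type} [AddCommGroup M] [Module k M] [AddCommGroup N] [Module k N]
    (ρ : M → S → M) (lam : S → N → N) : Type :=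
  (M ⊗[k] N) ⧸ relSub k ρ lam
def btmk {S M N : Type} [AddCommGroup M] [Module k M] [AddCommGroup N] [Module k N]
    (ρ : M → S → M) (lam : S → N → N) : M →ₗ[k] N →ₗ[k] BT k ρ lam :=
  (TensorProduct.mk k M N).compr₂ (relSub k ρ lam).mkQ
theorem btmk_rel {S M N : Type} [AddCommGroup M] [Module k M] [AddCommGroup N] [Module k N]
    (ρ : M → S → M) (lam : S → N → N) (m : M) (b : S) (n : N) :
    btmk k ρ lam (ρ m b) n = btmk k ρ lam m (lam b n) := by
  show (relSub k ρ lam).mkQ _ = (relSub k ρ lam).mkQ _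
  rw [Submodule.mkQ_apply, Submodule.mkQ_apply, Submodule.Quotient.eq]
  exact Submodule.subset_span ⟨m, b, n, rfl⟩
def btDesc {S M N P : Type} [AddCommGroup M] [Module k M] [AddCommGroup N] [Module k N]
    [AddCommGroup P] [Module k P]
    (ρ : M → S → M) (lam : S → N → N) (f : M →ₗ[k] N →ₗ[k] P)
    (hf : ∀ m b n, f (ρ m b) n = f m (lam b n)) :
    BT k ρ lam →ₗ[k] P :=
  Submodule.liftQ _ (TensorProduct.lift f) (by
    rw [relSub, Submodule.span_le]
    rintro t ⟨m, b, n, rfl⟩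
    simp [SetLike.mem_coe, LinearMap.mem_ker, map_sub, hf m b n])
@[simp] theorem btDesc_mk {S M N P : Type} [AddCommGroup M] [Module k M] [AddCommGroup N]
    [Module k N] [AddCommGroup P] [Module k P]
    (ρ : M → S → M) (lam : S → N → N) (f : M →ₗ[k] N →ₗ[k] P)
    (hf : ∀ m b n, f (ρ m b) n = f m (lam b n)) (m : M) (n : N) :
    btDesc k ρ lam f hf (btmk k ρ lam m n) = f m n := by
  simp [btDesc, btmk, LinearMap.compr₂_apply, TensorProduct.mk_apply]
-- [END CORE]

/-- A diagonal `k`-linear category: a family of (not necessarily commutative,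
associative, unital) `k`-algebras indexed by `X`. -/
structure DiagAlg (X : Type) where
  C : X → Type
  [acg : ∀ x, AddCommGroup (C x)]
  [mod : ∀ x, Module k (C x)]
  mul : ∀ {x : X}, C x → C x → C x
  one : ∀ x : X, C x
  add_mul : ∀ {x : X} (a a' b : C x), mul (a + a') b = mul a b + mul a' b
  smul_mul : ∀ {x : X} (c : k) (a b : C x), mul (c • a) b = c • mul a b
  mul_add : ∀ {x : X} (a b b' : C x), mul a (b + b') = mul a b + mul a b'
  mul_smul : ∀ {x : X} (c : k) (a b : C x), mul a (c • b) = c • mul a b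
  mul_assoc : ∀ {x : X} (a b c : C x), mul (mul a b) c = mul a (mul b c)
  one_mul : ∀ {x : X} (a : C x), mul (one x) a = a
  mul_one : ∀ {x : X} (a : C x), mul a (one x) = a

attribute [instance] DiagAlg.acg DiagAlg.mod

variable {k}

/-- A `k`-linear `X`-functor from a diagonal category `B` to `A`: a family of
`k`-algebra maps `i x : B x → A x x`. -/
structure XFun {X : Type} (B : DiagAlg k X) (A : KCat k X) where
  i : ∀ x, B.C x →ₗ[k] A.M x x
  i_mul : ∀ x (b b' : B.C x), i x (B.mul b b') = A.mul (i x b) (i x b')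
  i_one : ∀ x, i x (B.one x) = A.one x

/-- A family of right `B_x`-modules (an object of `D_k(X)` with right `B`-action). -/
structure DModData {X : Type} (B : DiagAlg k X) where
  N : X → Type
  [acg : ∀ x, AddCommGroup (N x)]
  [mod : ∀ x, Module k (N x)]
  ract : ∀ {x : X}, N x → B.C x → N x

attribute [instance] DModData.acg DModData.mod

/-- The axioms making `Nd` an object of `D_k(X)_B`. -/
structure IsDMod {X : Type} {B : DiagAlg k X} (Nd : DModData B) : Prop where
  add_ract : ∀ {x : X} (n n' : Nd.N x) (b : B.C x), Nd.ract (n + n') b = Nd.ract n b + Nd.ract n' b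
  ract_add : ∀ {x : X} (n : Nd.N x) (b b' : B.C x), Nd.ract n (b + b') = Nd.ract n b + Nd.ract n b'
  smul_ract : ∀ {x : X} (c : k) (n : Nd.N x) (b : B.C x), Nd.ract (c • n) b = c • Nd.ract n b
  ract_smul : ∀ {x : X} (c : k) (n : Nd.N x) (b : B.C x), Nd.ract n (c • b) = c • Nd.ract n b
  ract_assoc : ∀ {x : X} (n : Nd.N x) (b b' : B.C x),
    Nd.ract (Nd.ract n b) b' = Nd.ract n (B.mul b b')
  ract_one : ∀ {x : X} (n : Nd.N x), Nd.ract n (B.one x) = n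

/-- Morphisms in `D_k(X)_B`. -/
structure IsDModHom {X : Type} {B : DiagAlg k X} (Nd Nd' : DModData B)
    (g : ∀ x, Nd.N x → Nd'.N x) : Prop where
  map_add : ∀ x (n n' : Nd.N x), g x (n + n') = g x n + g x n'
  map_smul : ∀ x (c : k) (n : Nd.N x), g x (c • n) = c • g x n
  map_ract : ∀ x (n : Nd.N x) (b : B.C x), g x (Nd.ract n b) = Nd'.ract (g x n) b

/-- A right module (in `M_k(X)`) over the `k`-linear category `A` (data only). -/
structure RModData {X : Type} (A : KCat k X) where
  M : X → X → Type
  [acg : ∀ x y, AddCommGroup (M x y)]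
  [mod : ∀ x y, Module k (M x y)]
  act : ∀ {x y z : X}, M x y → A.M y z → M x z

attribute [instance] RModData.acg RModData.mod

/-- The axioms of a right `A`-module. -/
structure IsRMod {X : Type} {A : KCat k X} (Md : RModData A) : Prop where
  add_act : ∀ {x y z : X} (m m' : Md.M x y) (a : A.M y z), Md.act (m + m') a = Md.act m a + Md.act m' a
  act_add : ∀ {x y z : X} (m : Md.M x y) (a a' : A.M y z), Md.act m (a + a') = Md.act m a + Md.act m a'
  smul_act : ∀ {x y z : X} (c : k) (m : Md.M x y) (a : A.M y z), Md.act (c • m) a = c • Md.act m a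
  act_smul : ∀ {x y z : X} (c : k) (m : Md.M x y) (a : A.M y z), Md.act m (c • a) = c • Md.act m a
  act_assoc : ∀ {x y z w : X} (m : Md.M x y) (a : A.M y z) (b : A.M z w),
    Md.act (Md.act m a) b = Md.act m (A.mul a b)
  act_one : ∀ {x y : X} (m : Md.M x y), Md.act m (A.one y) = m

/-- Morphisms of right `A`-modules. -/
structure IsRModHom {X : Type} {A : KCat k X} (Md Md' : RModData A)
    (f : ∀ x y, Md.M x y → Md'.M x y) : Prop where
  map_add : ∀ x y (m m' : Md.M x y), f x y (m + m') = f x y m + f x y m'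
  map_smul : ∀ x y (c : k) (m : Md.M x y), f x y (c • m) = c • f x y m
  map_act : ∀ x y z (m : Md.M x y) (a : A.M y z), f x z (Md.act m a) = Md'.act (f x y m) a

section Descent

variable {X : Type} (A : KCat k X) (B : DiagAlg k X) (F : XFun B A)

/-- `M_{xx} ⊗_{B_x} A_{xy}`, for a right `A`-module `M`, where `B` acts via `i = F.i`. -/
abbrev DTc (Md : RModData A) (x y : X) : Type :=
  BT k (fun (m : Md.M x x) (b : B.C x) => Md.act m (F.i x b))
       (fun (b : B.C x) (a : A.M x y) => A.mul (F.i x b) a)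

abbrev dtmk (Md : RModData A) (x y : X) :
    Md.M x x →ₗ[k] A.M x y →ₗ[k] DTc A B F Md x y :=
  btmk k _ _

/-- Right multiplication by `a : A_{yz}` on the second factor of `M_{xx} ⊗_{B_x} A_{xy}`. -/
def dtRmul (Md : RModData A) {x y z : X} (a : A.M y z) :
    DTc A B F Md x y →ₗ[k] DTc A B F Md x z :=
  btDesc k _ _ ((dtmk A B F Md x z).compl₂ ((A.mulLin x y z).flip a)) (by
    intro m b a'
    simp only [LinearMap.compl₂_apply, LinearMap.flip_apply, KCat.mulLin_apply]
    rw [A.mul_assoc]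
    exact btmk_rel k _ _ m b (A.mul a' a))

@[simp] theorem dtRmul_mk (Md : RModData A) {x y z : X} (a : A.M y z)
    (m : Md.M x x) (a' : A.M x y) :
    dtRmul A B F Md a (dtmk A B F Md x y m a') = dtmk A B F Md x z m (A.mul a' a) := by
  simp [dtRmul]

/-- `(M_{xx} ⊗_{B_x} A_{xx}) ⊗_{B_x} A_{xy}`. -/
abbrev DT2c (Md : RModData A) (x y : X) : Type :=
  BT k (fun (t : DTc A B F Md x x) (b : B.C x) => dtRmul A B F Md (F.i x b) t)
       (fun (b : B.C x) (a : A.M x y) => A.mul (F.i x b) a)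

abbrev dt2mk (Md : RModData A) (x y : X) :
    DTc A B F Md x x →ₗ[k] A.M x y →ₗ[k] DT2c A B F Md x y :=
  btmk k _ _

/-- A descent datum: a right `A`-module together with the maps `σ_{xy}`. -/
structure DescData where
  Md : RModData A
  sig : ∀ (x y : X), Md.M x y → DTc A B F Md x y

/-- The axioms of a descent datum.  The conditions `c2` and `c3` are expressed via
(arbitrary) representatives `σ_{xy}(m) = ∑ⱼ m0 j ⊗ m1 j` of the element `σ_{xy}(m)`
of the balanced tensor product. -/
structure IsDesc (D : DescData A B F) : Prop where
  mod : IsRMod D.Md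
  sig_add : ∀ x y (m m' : D.Md.M x y), D.sig x y (m + m') = D.sig x y m + D.sig x y m'
  sig_smul : ∀ x y (c : k) (m : D.Md.M x y), D.sig x y (c • m) = c • D.sig x y m
  c1 : ∀ x y z (m : D.Md.M x y) (a : A.M y z),
    D.sig x z (D.Md.act m a) = dtRmul A B F D.Md a (D.sig x y m)
  c2 : ∀ x y (m : D.Md.M x y) (n : ℕ) (m0 : Fin n → D.Md.M x x) (m1 : Fin n → A.M x y),
    D.sig x y m = ∑ j, dtmk A B F D.Md x y (m0 j) (m1 j) →
    ∑ j, dt2mk A B F D.Md x y (D.sig x x (m0 j)) (m1 j)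
      = ∑ j, dt2mk A B F D.Md x y (dtmk A B F D.Md x x (m0 j) (A.one x)) (m1 j)
  c3 : ∀ x y (m : D.Md.M x y) (n : ℕ) (m0 : Fin n → D.Md.M x x) (m1 : Fin n → A.M x y),
    D.sig x y m = ∑ j, dtmk A B F D.Md x y (m0 j) (m1 j) →
    ∑ j, D.Md.act (m0 j) (m1 j) = m

/-- Morphisms of descent data. -/
structure IsDescHom (D D' : DescData A B F) (f : ∀ x y, D.Md.M x y → D'.Md.M x y) : Prop where
  mod : IsRModHom D.Md D'.Md f
  compat : ∀ x y (m : D.Md.M x y) (n : ℕ) (m0 : Fin n → D.Md.M x x) (m1 : Fin n → A.M x y),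
    D.sig x y m = ∑ j, dtmk A B F D.Md x y (m0 j) (m1 j) →
    D'.sig x y (f x y m) = ∑ j, dtmk A B F D'.Md x y (f x x (m0 j)) (m1 j)

/-- `G(M)_x = { m ∈ M_{xx} | σ_{xx}(m) = m ⊗ 1_x }`. -/
def Gset (D : DescData A B F) (x : X) : Set (D.Md.M x x) :=
  {m | D.sig x x m = dtmk A B F D.Md x x m (A.one x)}

/-- `N_x ⊗_{B_x} A_{xy}` for a diagonal right `B`-module `N`. -/
abbrev FTc (Nd : DModData B) (x y : X) : Type :=
  BT k (fun (n : Nd.N x) (b : B.C x) => Nd.ract n b)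
       (fun (b : B.C x) (a : A.M x y) => A.mul (F.i x b) a)

abbrev ftmk (Nd : DModData B) (x y : X) :
    Nd.N x →ₗ[k] A.M x y →ₗ[k] FTc A B F Nd x y :=
  btmk k _ _

/-- The right `A`-action `(n ⊗ a)·b := n ⊗ ab` on `F(N)`. -/
def ftRmul (Nd : DModData B) {x y z : X} (a : A.M y z) :
    FTc A B F Nd x y →ₗ[k] FTc A B F Nd x z :=
  btDesc k _ _ ((ftmk A B F Nd x z).compl₂ ((A.mulLin x y z).flip a)) (by
    intro m b a'
    simp only [LinearMap.compl₂_apply, LinearMap.flip_apply, KCat.mulLin_apply]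
    rw [A.mul_assoc]
    exact btmk_rel k _ _ m b (A.mul a' a))

@[simp] theorem ftRmul_mk (Nd : DModData B) {x y z : X} (a : A.M y z)
    (n : Nd.N x) (a' : A.M x y) :
    ftRmul A B F Nd a (ftmk A B F Nd x y n a') = ftmk A B F Nd x z n (A.mul a' a) := by
  simp [ftRmul]

/-- The right `A`-module `F(N)`. -/
def FNMod (Nd : DModData B) : RModData A where
  M := FTc A B F Nd
  act := fun {x y z} t a => ftRmul A B F Nd a t

@[simp] theorem FNMod_act (Nd : DModData B) {x y z : X} (t : FTc A B F Nd x y) (a : A.M y z) :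
    (FNMod A B F Nd).act t a = ftRmul A B F Nd a t := rfl

/-- `n ↦ n ⊗ 1_x` as a linear map `N_x → F(N)_{xx}`. -/
def etaLin (Nd : DModData B) (x : X) : Nd.N x →ₗ[k] FTc A B F Nd x x where
  toFun := fun n => ftmk A B F Nd x x n (A.one x)
  map_add' := by intro n n'; simp [map_add]
  map_smul' := by intro c n; simp [map_smul]

@[simp] theorem etaLin_apply (Nd : DModData B) (x : X) (n : Nd.N x) :
    etaLin A B F Nd x n = ftmk A B F Nd x x n (A.one x) := rfl

/-- The descent map `σ_{xy}(n ⊗ a) = (n ⊗ 1_x) ⊗ a` of `F(N)`. -/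
def FNsig (Nd : DModData B) (x y : X) :
    FTc A B F Nd x y →ₗ[k] DTc A B F (FNMod A B F Nd) x y :=
  btDesc k (fun (n : Nd.N x) (b : B.C x) => Nd.ract n b)
    (fun (b : B.C x) (a : A.M x y) => A.mul (F.i x b) a)
    ((dtmk A B F (FNMod A B F Nd) x y).comp (etaLin A B F Nd x)) (by
    intro n b a
    show (dtmk A B F (FNMod A B F Nd) x y) (ftmk A B F Nd x x (Nd.ract n b) (A.one x)) a
      = (dtmk A B F (FNMod A B F Nd) x y) (ftmk A B F Nd x x n (A.one x)) (A.mul (F.i x b) a)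
    rw [btmk_rel k _ _ n b (A.one x), A.mul_one]
    have h2 := btmk_rel k
      (fun (t : (FNMod A B F Nd).M x x) (b : B.C x) => (FNMod A B F Nd).act t (F.i x b))
      (fun (b : B.C x) (a : A.M x y) => A.mul (F.i x b) a)
      (ftmk A B F Nd x x n (A.one x)) b a
    rw [← h2]
    have h3 : (FNMod A B F Nd).act (ftmk A B F Nd x x n (A.one x)) (F.i x b)
        = ftmk A B F Nd x x n (F.i x b) := by
      show ftRmul A B F Nd (F.i x b) (ftmk A B F Nd x x n (A.one x)) = _
      rw [ftRmul_mk, A.one_mul]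
    rw [h3])

@[simp] theorem FNsig_mk (Nd : DModData B) (x y : X) (n : Nd.N x) (a : A.M x y) :
    FNsig A B F Nd x y (ftmk A B F Nd x y n a)
      = dtmk A B F (FNMod A B F Nd) x y (ftmk A B F Nd x x n (A.one x)) a := rfl

/-- The descent datum `F(N)`. -/
def FNDesc (Nd : DModData B) : DescData A B F where
  Md := FNMod A B F Nd
  sig := fun x y t => FNsig A B F Nd x y t

end Descent

section MapLeft

variable {X : Type}

/-- `g ⊗ id` on balanced tensor products. -/
def btMapLeft {S N N' Q : Type} [AddCommGroup N] [Module k N] [AddCommGroup N'] [Module k N']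
    [AddCommGroup Q] [Module k Q]
    (ρ : N → S → N) (ρ' : N' → S → N') (lam : S → Q → Q)
    (g : N →ₗ[k] N') (hg : ∀ n b, g (ρ n b) = ρ' (g n) b) :
    BT k ρ lam →ₗ[k] BT k ρ' lam :=
  btDesc k ρ lam ((btmk k ρ' lam).comp g) (by
    intro n b q
    simp only [LinearMap.comp_apply, hg]
    exact btmk_rel k ρ' lam (g n) b q)

@[simp] theorem btMapLeft_mk {S N N' Q : Type} [AddCommGroup N] [Module k N] [AddCommGroup N']
    [Module k N'] [AddCommGroup Q] [Module k Q]
    (ρ : N → S → N) (ρ' : N' → S → N') (lam : S → Q → Q)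
    (g : N →ₗ[k] N') (hg : ∀ n b, g (ρ n b) = ρ' (g n) b) (n : N) (q : Q) :
    btMapLeft ρ ρ' lam g hg (btmk k ρ lam n q) = btmk k ρ' lam (g n) q := by
  simp [btMapLeft]

end MapLeft

section Descent2

variable {X : Type} (A : KCat k X) (B : DiagAlg k X) (F : XFun B A)

/-- `F(g) = g ⊗ A` for a morphism `g` of diagonal modules. -/
def FNMap (Nd Nd' : DModData B) (g : ∀ x, Nd.N x →ₗ[k] Nd'.N x)
    (hg : ∀ x (n : Nd.N x) (b : B.C x), g x (Nd.ract n b) = Nd'.ract (g x n) b)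
    (x y : X) : FTc A B F Nd x y →ₗ[k] FTc A B F Nd' x y :=
  btMapLeft _ _ _ (g x) (hg x)

/-- `G(M)_x` as a `k`-submodule of `M_{xx}`. -/
def Gsub (D : DescData A B F) (hD : IsDesc A B F D) (x : X) :
    Submodule k (D.Md.M x x) where
  carrier := Gset A B F D x
  add_mem' := by
    intro a b ha hb
    simp only [Gset, Set.mem_setOf_eq] at *
    rw [hD.sig_add, ha, hb]
    simp [map_add]
  zero_mem' := by
    have h0 : D.sig x x (0 : D.Md.M x x) = 0 := by
      have := hD.sig_smul x x (0 : k) 0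
      simpa using this
    simp only [Gset, Set.mem_setOf_eq, h0, map_zero, LinearMap.zero_apply]
  smul_mem' := by
    intro c m hm
    simp only [Gset, Set.mem_setOf_eq] at *
    rw [hD.sig_smul, hm]
    simp [map_smul]

theorem Gsub_closed (D : DescData A B F) (hD : IsDesc A B F D) (x : X)
    (m : D.Md.M x x) (hm : m ∈ Gsub A B F D hD x) (b : B.C x) :
    D.Md.act m (F.i x b) ∈ Gsub A B F D hD x := by
  have hm' : D.sig x x m = dtmk A B F D.Md x x m (A.one x) := hm
  show D.sig x x (D.Md.act m (F.i x b)) = dtmk A B F D.Md x x (D.Md.act m (F.i x b)) (A.one x)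
  rw [hD.c1, hm', dtRmul_mk, A.one_mul]
  rw [btmk_rel k (fun (m : D.Md.M x x) (b : B.C x) => D.Md.act m (F.i x b))
      (fun (b : B.C x) (a : A.M x x) => A.mul (F.i x b) a) m b (A.one x), A.mul_one]

/-- `G(M)` as a diagonal right `B`-module. -/
def GMod (D : DescData A B F) (hD : IsDesc A B F D) : DModData B where
  N := fun x => ↥(Gsub A B F D hD x)
  ract := fun {x} m b => ⟨D.Md.act m.1 (F.i x b), Gsub_closed A B F D hD x m.1 m.2 b⟩

/-- The counit `ε^M : G(M)_x ⊗_{B_x} A_{xy} → M_{xy}`, `m ⊗ a ↦ ma`. -/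
def epsMap (D : DescData A B F) (hD : IsDesc A B F D) (x y : X) :
    FTc A B F (GMod A B F D hD) x y →ₗ[k] D.Md.M x y :=
  btDesc k
    (fun (m : ↥(Gsub A B F D hD x)) (b : B.C x) =>
      (⟨D.Md.act m.1 (F.i x b), Gsub_closed A B F D hD x m.1 m.2 b⟩ : ↥(Gsub A B F D hD x)))
    (fun (b : B.C x) (a : A.M x y) => A.mul (F.i x b) a)
    (LinearMap.mk₂ k (fun (m : ↥(Gsub A B F D hD x)) (a : A.M x y) => D.Md.act m.1 a)
      (by intro m m' a; exact hD.mod.add_act m.1 m'.1 a)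
      (by intro c m a; exact hD.mod.smul_act c m.1 a)
      (by intro m a a'; exact hD.mod.act_add m.1 a a')
      (by intro c m a; exact hD.mod.act_smul c m.1 a))
    (by intro m b a; exact hD.mod.act_assoc m.1 (F.i x b) a)

@[simp] theorem epsMap_mk (D : DescData A B F) (hD : IsDesc A B F D) (x y : X)
    (m : ↥(Gsub A B F D hD x)) (a : A.M x y) :
    epsMap A B F D hD x y (ftmk A B F (GMod A B F D hD) x y m a) = D.Md.act m.1 a := rfl

/-- The unit `η^N_x : N_x → F(N)_{xx}`, `n ↦ n ⊗ 1_x` (its corestriction to `GF(N)` is the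
unit of the adjunction). -/
def etaMap (Nd : DModData B) (x : X) : Nd.N x → FTc A B F Nd x x :=
  fun n => ftmk A B F Nd x x n (A.one x)

end Descent2

section AuxProof

theorem bt_induction {S M N : Type} [AddCommGroup M] [Module k M] [AddCommGroup N] [Module k N]
    {ρ : M → S → M} {lam : S → N → N} {P : BT k ρ lam → Prop}
    (hmk : ∀ m n, P (btmk k ρ lam m n))
    (hadd : ∀ t t', P t → P t' → P (t + t'))
    (t : BT k ρ lam) : P t := by
  obtain ⟨u, rfl⟩ := Submodule.mkQ_surjective _ t
  induction u using TensorProduct.induction_on with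
  | zero => simpa using hmk 0 0
  | tmul m n => exact hmk m n
  | add u v hu hv => rw [map_add]; exact hadd _ _ hu hv

variable {X : Type} (A : KCat k X) (B : DiagAlg k X) (F : XFun B A)

theorem ftRmul_addA (Nd : DModData B) {x y z : X} (a a' : A.M y z) (t : FTc A B F Nd x y) :
    ftRmul A B F Nd (a + a') t = ftRmul A B F Nd a t + ftRmul A B F Nd a' t := by
  induction t using bt_induction with
  | hmk n b => simp [A.mul_add]
  | hadd t t' ht ht' => simp only [map_add, ht, ht']; abel

theorem ftRmul_smulA (Nd : DModData B) {x y z : X} (c : k) (a : A.M y z) (t : FTc A B F Nd x y) :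
    ftRmul A B F Nd (c • a) t = c • ftRmul A B F Nd a t := by
  induction t using bt_induction with
  | hmk n b => simp [A.mul_smul]
  | hadd t t' ht ht' => simp only [map_add, ht, ht', smul_add]

theorem ftRmul_mulA (Nd : DModData B) {x y z w : X} (a : A.M y z) (b : A.M z w)
    (t : FTc A B F Nd x y) :
    ftRmul A B F Nd b (ftRmul A B F Nd a t) = ftRmul A B F Nd (A.mul a b) t := by
  induction t using bt_induction with
  | hmk n a' => simp [A.mul_assoc]
  | hadd t t' ht ht' => simp only [map_add, ht, ht']

theorem ftRmul_oneA (Nd : DModData B) {x y : X} (t : FTc A B F Nd x y) :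
    ftRmul A B F Nd (A.one y) t = t := by
  induction t using bt_induction with
  | hmk n a' => simp [A.mul_one]
  | hadd t t' ht ht' => simp only [map_add, ht, ht']

theorem isRMod_FNMod (Nd : DModData B) : IsRMod (FNMod A B F Nd) where
  add_act := fun m m' a => map_add (ftRmul A B F Nd a) m m'
  act_add := fun m a a' => ftRmul_addA A B F Nd a a' m
  smul_act := fun c m a => map_smul (ftRmul A B F Nd a) c m
  act_smul := fun c m a => ftRmul_smulA A B F Nd c a m
  act_assoc := fun m a b => ftRmul_mulA A B F Nd a b m
  act_one := fun m => ftRmul_oneA A B F Nd m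

theorem FNsig_act (Nd : DModData B) {x y z : X} (t : FTc A B F Nd x y) (a : A.M y z) :
    FNsig A B F Nd x z (ftRmul A B F Nd a t)
      = dtRmul A B F (FNMod A B F Nd) a (FNsig A B F Nd x y t) := by
  induction t using bt_induction with
  | hmk n a' => simp; exact (dtRmul_mk A B F (FNMod A B F Nd) a _ a').symm
  | hadd t t' ht ht' => simp only [map_add, ht, ht']

def evMap (Nd : DModData B) (x y : X) :
    DTc A B F (FNMod A B F Nd) x y →ₗ[k] FTc A B F Nd x y :=
  btDesc k _ _
    (LinearMap.mk₂ k (fun (t : FTc A B F Nd x x) (a : A.M x y) => ftRmul A B F Nd a t)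
      (fun t t' a => map_add _ _ _)
      (fun c t a => map_smul _ _ _)
      (fun t a a' => ftRmul_addA A B F Nd a a' t)
      (fun c t a => ftRmul_smulA A B F Nd c a t))
    (fun t b a => by
      show ftRmul A B F Nd a (ftRmul A B F Nd (F.i x b) t) = _
      exact ftRmul_mulA A B F Nd (F.i x b) a t)

@[simp] theorem evMap_mk (Nd : DModData B) (x y : X) (t : FTc A B F Nd x x) (a : A.M x y) :
    evMap A B F Nd x y (dtmk A B F (FNMod A B F Nd) x y t a) = ftRmul A B F Nd a t := rfl

theorem evMap_sig (Nd : DModData B) (x y : X) (m : FTc A B F Nd x y) :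
    evMap A B F Nd x y (FNsig A B F Nd x y m) = m := by
  induction m using bt_induction with
  | hmk n a => simp [A.one_mul]
  | hadd t t' ht ht' => simp only [map_add, ht, ht']

def thetaMap (Nd : DModData B) (x y : X) :
    DTc A B F (FNMod A B F Nd) x y →ₗ[k] DT2c A B F (FNMod A B F Nd) x y :=
  btMapLeft _ _ _ (FNsig A B F Nd x x) (fun t b => FNsig_act A B F Nd t (F.i x b))

@[simp] theorem thetaMap_mk (Nd : DModData B) (x y : X) (t : FTc A B F Nd x x) (a : A.M x y) :
    thetaMap A B F Nd x y (dtmk A B F (FNMod A B F Nd) x y t a)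
      = dt2mk A B F (FNMod A B F Nd) x y (FNsig A B F Nd x x t) a := rfl

def theta'Map (Nd : DModData B) (x y : X) :
    DTc A B F (FNMod A B F Nd) x y →ₗ[k] DT2c A B F (FNMod A B F Nd) x y :=
  btMapLeft _ _ _ ((dtmk A B F (FNMod A B F Nd) x x).flip (A.one x)) (fun t b => by
    simp only [LinearMap.flip_apply]
    rw [btmk_rel k (fun (t : (FNMod A B F Nd).M x x) (b : B.C x) => (FNMod A B F Nd).act t (F.i x b))
        (fun (b : B.C x) (a : A.M x x) => A.mul (F.i x b) a) t b (A.one x)]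
    show dtmk A B F (FNMod A B F Nd) x x t (A.mul (F.i x b) (A.one x))
      = dtRmul A B F (FNMod A B F Nd) (F.i x b) (dtmk A B F (FNMod A B F Nd) x x t (A.one x))
    rw [dtRmul_mk, A.mul_one, A.one_mul])

@[simp] theorem theta'Map_mk (Nd : DModData B) (x y : X) (t : FTc A B F Nd x x) (a : A.M x y) :
    theta'Map A B F Nd x y (dtmk A B F (FNMod A B F Nd) x y t a)
      = dt2mk A B F (FNMod A B F Nd) x y (dtmk A B F (FNMod A B F Nd) x x t (A.one x)) a := rfl

theorem theta_eq (Nd : DModData B) (x y : X) (m : FTc A B F Nd x y) :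
    thetaMap A B F Nd x y (FNsig A B F Nd x y m)
      = theta'Map A B F Nd x y (FNsig A B F Nd x y m) := by
  induction m using bt_induction with
  | hmk n a => simp
  | hadd t t' ht ht' => simp only [map_add, ht, ht']

section FNMapAux
variable (Nd Nd' : DModData B) (g : ∀ x, Nd.N x →ₗ[k] Nd'.N x)
    (hg : ∀ x (n : Nd.N x) (b : B.C x), g x (Nd.ract n b) = Nd'.ract (g x n) b)

@[simp] theorem FNMap_mk (x y : X) (n : Nd.N x) (a : A.M x y) :
    FNMap A B F Nd Nd' g hg x y (ftmk A B F Nd x y n a) = ftmk A B F Nd' x y (g x n) a := rfl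

theorem FNMap_act {x y z : X} (a : A.M y z) (t : FTc A B F Nd x y) :
    FNMap A B F Nd Nd' g hg x z (ftRmul A B F Nd a t)
      = ftRmul A B F Nd' a (FNMap A B F Nd Nd' g hg x y t) := by
  induction t using bt_induction with
  | hmk n a' => simp
  | hadd t t' ht ht' => simp only [map_add, ht, ht']

def FNTMap (x y : X) :
    DTc A B F (FNMod A B F Nd) x y →ₗ[k] DTc A B F (FNMod A B F Nd') x y :=
  btMapLeft _ _ _ (FNMap A B F Nd Nd' g hg x x)
    (fun t b => FNMap_act A B F Nd Nd' g hg (F.i x b) t)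

@[simp] theorem FNTMap_mk (x y : X) (t : FTc A B F Nd x x) (a : A.M x y) :
    FNTMap A B F Nd Nd' g hg x y (dtmk A B F (FNMod A B F Nd) x y t a)
      = dtmk A B F (FNMod A B F Nd') x y (FNMap A B F Nd Nd' g hg x x t) a := rfl

theorem FNTMap_sig (x y : X) (m : FTc A B F Nd x y) :
    FNTMap A B F Nd Nd' g hg x y (FNsig A B F Nd x y m)
      = FNsig A B F Nd' x y (FNMap A B F Nd Nd' g hg x y m) := by
  induction m using bt_induction with
  | hmk n a => simp
  | hadd t t' ht ht' => simp only [map_add, ht, ht']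

end FNMapAux

section EpsAux
variable (D : DescData A B F) (hD : IsDesc A B F D)

theorem epsMap_act {x y z : X} (a : A.M y z) (t : FTc A B F (GMod A B F D hD) x y) :
    epsMap A B F D hD x z (ftRmul A B F (GMod A B F D hD) a t)
      = D.Md.act (epsMap A B F D hD x y t) a := by
  induction t using bt_induction with
  | hmk m a' => simp [hD.mod.act_assoc]; exact (hD.mod.act_assoc m.1 a' a).symm
  | hadd t t' ht ht' => simp only [map_add, hD.mod.add_act, ht, ht']

def PsiMap (x y : X) :
    DTc A B F (FNMod A B F (GMod A B F D hD)) x y →ₗ[k] DTc A B F D.Md x y :=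
  btMapLeft _ _ _ (epsMap A B F D hD x x) (fun t b => epsMap_act A B F D hD (F.i x b) t)

@[simp] theorem PsiMap_mk (x y : X) (t : FTc A B F (GMod A B F D hD) x x) (a : A.M x y) :
    PsiMap A B F D hD x y (dtmk A B F (FNMod A B F (GMod A B F D hD)) x y t a)
      = dtmk A B F D.Md x y (epsMap A B F D hD x x t) a := rfl

theorem PsiMap_sig (x y : X) (m : FTc A B F (GMod A B F D hD) x y) :
    PsiMap A B F D hD x y (FNsig A B F (GMod A B F D hD) x y m)
      = D.sig x y (epsMap A B F D hD x y m) := by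
  induction m using bt_induction with
  | hmk m a =>
    have hm : D.sig x x m.1 = dtmk A B F D.Md x x m.1 (A.one x) := m.2
    simp [hD.c1, hm, hD.mod.act_one, A.one_mul]
    show dtmk A B F D.Md x y (D.Md.act m.1 (A.one x)) a = D.sig x y (D.Md.act m.1 a)
    rw [hD.c1, hm, dtRmul_mk, A.one_mul, hD.mod.act_one]
  | hadd t t' ht ht' => simp only [map_add, ht, ht', hD.sig_add]

end EpsAux

end AuxProof


/-- Proposition 2.2: for a `k`-linear `X`-functor `i : B → A` from a
diagonal `k`-linear category `B` to a `k`-linear category `A`, the formulas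
`F(N)_{xy} = N_x ⊗_{B_x} A_{xy}` (with `(n ⊗ a)b = n ⊗ ab`, `σ(n ⊗ a) = n ⊗ 1_x ⊗ a`),
`G(M)_x = {m ∈ M_{xx} | σ_{xx} m = m ⊗ 1_x}`, unit `η(n) = n ⊗ 1_x` and counit
`ε(m ⊗ a) = ma` yield an adjoint pair of functors between `D_k(X)_B` and `Desc_B(A)`. -/
theorem stmt0 {k X : Type} [CommRing k] (A : KCat k X) (B : DiagAlg k X) (F : XFun B A) :
    -- F is well defined on objects: F(N) is a descent datum
    (∀ (Nd : DModData B), IsDMod Nd → IsDesc A B F (FNDesc A B F Nd))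
    ∧
    -- F is well defined on morphisms
    (∀ (Nd Nd' : DModData B), IsDMod Nd → IsDMod Nd' →
      ∀ (g : ∀ x, Nd.N x →ₗ[k] Nd'.N x)
        (hg : ∀ x (n : Nd.N x) (b : B.C x), g x (Nd.ract n b) = Nd'.ract (g x n) b),
      IsDescHom A B F (FNDesc A B F Nd) (FNDesc A B F Nd')
        (fun x y t => FNMap A B F Nd Nd' g hg x y t))
    ∧
    -- G is well defined on objects: G(M)_x is closed under the right B_x-action
    (∀ (D : DescData A B F), IsDesc A B F D →
      ∀ x (m : D.Md.M x x), m ∈ Gset A B F D x →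
        ∀ b : B.C x, D.Md.act m (F.i x b) ∈ Gset A B F D x)
    ∧
    -- G is well defined on morphisms
    (∀ (D D' : DescData A B F), IsDesc A B F D → IsDesc A B F D' →
      ∀ (f : ∀ x y, D.Md.M x y → D'.Md.M x y), IsDescHom A B F D D' f →
      ∀ x (m : D.Md.M x x), m ∈ Gset A B F D x → f x x m ∈ Gset A B F D' x)
    ∧
    -- the unit lands in GF(N)
    (∀ (Nd : DModData B), IsDMod Nd →
      ∀ x (n : Nd.N x), etaMap A B F Nd x n ∈ Gset A B F (FNDesc A B F Nd) x)
    ∧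
    -- the unit is right B-linear
    (∀ (Nd : DModData B), IsDMod Nd → ∀ x (n : Nd.N x) (b : B.C x),
      etaMap A B F Nd x (Nd.ract n b)
        = (FNMod A B F Nd).act (etaMap A B F Nd x n) (F.i x b))
    ∧
    -- naturality of the unit
    (∀ (Nd Nd' : DModData B), IsDMod Nd → IsDMod Nd' →
      ∀ (g : ∀ x, Nd.N x →ₗ[k] Nd'.N x)
        (hg : ∀ x (n : Nd.N x) (b : B.C x), g x (Nd.ract n b) = Nd'.ract (g x n) b),
      ∀ x (n : Nd.N x),
        FNMap A B F Nd Nd' g hg x x (etaMap A B F Nd x n) = etaMap A B F Nd' x (g x n))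
    ∧
    -- the counit is a morphism of descent data  FG(M) → M
    (∀ (D : DescData A B F) (hD : IsDesc A B F D),
      IsDescHom A B F (FNDesc A B F (GMod A B F D hD)) D
        (fun x y t => epsMap A B F D hD x y t))
    ∧
    -- naturality of the counit
    (∀ (D D' : DescData A B F) (hD : IsDesc A B F D) (hD' : IsDesc A B F D')
      (f : ∀ x y, D.Md.M x y → D'.Md.M x y), IsDescHom A B F D D' f →
      ∀ x y (m : ↥(Gsub A B F D hD x)) (hm' : f x x m.1 ∈ Gsub A B F D' hD' x) (a : A.M x y),
        f x y (epsMap A B F D hD x y (ftmk A B F (GMod A B F D hD) x y m a))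
          = epsMap A B F D' hD' x y (ftmk A B F (GMod A B F D' hD') x y ⟨f x x m.1, hm'⟩ a))
    ∧
    -- first triangle identity:  ε_{F(N)} ∘ F(η^N) = id_{F(N)}
    (∀ (Nd : DModData B), IsDMod Nd → ∀ (hFN : IsDesc A B F (FNDesc A B F Nd))
      (x y : X) (n : Nd.N x) (a : A.M x y)
      (hmem : etaMap A B F Nd x n ∈ Gsub A B F (FNDesc A B F Nd) hFN x),
      epsMap A B F (FNDesc A B F Nd) hFN x y
        (ftmk A B F (GMod A B F (FNDesc A B F Nd) hFN) x y ⟨etaMap A B F Nd x n, hmem⟩ a)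
        = ftmk A B F Nd x y n a)
    ∧
    -- second triangle identity:  G(ε^M) ∘ η^{G(M)} = id_{G(M)}
    (∀ (D : DescData A B F) (hD : IsDesc A B F D) (x : X) (m : ↥(Gsub A B F D hD x)),
      epsMap A B F D hD x x (ftmk A B F (GMod A B F D hD) x x m (A.one x)) = m.1) := by
  refine ⟨?_, ?_, ?_, ?_, ?_, ?_, ?_, ?_, ?_, ?_, ?_⟩
  · -- F well defined on objects
    intro Nd hNd
    refine ⟨isRMod_FNMod A B F Nd,
      fun x y m m' => map_add (FNsig A B F Nd x y) m m',
      fun x y c m => map_smul (FNsig A B F Nd x y) c m,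
      fun x y z m a => FNsig_act A B F Nd m a, ?_, ?_⟩
    · intro x y m n m0 m1 h
      have h' : FNsig A B F Nd x y m
          = ∑ j, dtmk A B F (FNMod A B F Nd) x y (m0 j) (m1 j) := h
      show ∑ j, dt2mk A B F (FNMod A B F Nd) x y (FNsig A B F Nd x x (m0 j)) (m1 j)
          = ∑ j, dt2mk A B F (FNMod A B F Nd) x y
              (dtmk A B F (FNMod A B F Nd) x x (m0 j) (A.one x)) (m1 j)
      have e1 : thetaMap A B F Nd x y (FNsig A B F Nd x y m)
          = ∑ j, dt2mk A B F (FNMod A B F Nd) x y (FNsig A B F Nd x x (m0 j)) (m1 j) := by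
        rw [h', map_sum]; rfl
      have e2 : theta'Map A B F Nd x y (FNsig A B F Nd x y m)
          = ∑ j, dt2mk A B F (FNMod A B F Nd) x y
              (dtmk A B F (FNMod A B F Nd) x x (m0 j) (A.one x)) (m1 j) := by
        rw [h', map_sum]; rfl
      rw [← e1, ← e2, theta_eq A B F Nd x y m]
    · intro x y m n m0 m1 h
      have h' : FNsig A B F Nd x y m
          = ∑ j, dtmk A B F (FNMod A B F Nd) x y (m0 j) (m1 j) := h
      show ∑ j, ftRmul A B F Nd (m1 j) (m0 j) = m
      have e1 : evMap A B F Nd x y (FNsig A B F Nd x y m)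
          = ∑ j, ftRmul A B F Nd (m1 j) (m0 j) := by
        rw [h', map_sum]; rfl
      rw [← e1]; exact evMap_sig A B F Nd x y m
  · -- F well defined on morphisms
    intro Nd Nd' hNd hNd' g hg
    refine ⟨⟨fun x y m m' => map_add (FNMap A B F Nd Nd' g hg x y) m m',
      fun x y c m => map_smul (FNMap A B F Nd Nd' g hg x y) c m,
      fun x y z m a => FNMap_act A B F Nd Nd' g hg a m⟩, ?_⟩
    intro x y m n m0 m1 h
    have h' : FNsig A B F Nd x y m
        = ∑ j, dtmk A B F (FNMod A B F Nd) x y (m0 j) (m1 j) := h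
    show FNsig A B F Nd' x y (FNMap A B F Nd Nd' g hg x y m)
        = ∑ j, dtmk A B F (FNMod A B F Nd') x y (FNMap A B F Nd Nd' g hg x x (m0 j)) (m1 j)
    rw [← FNTMap_sig A B F Nd Nd' g hg x y m, h', map_sum]
    rfl
  · -- G well defined on objects
    intro D hD x m hm b
    exact Gsub_closed A B F D hD x m hm b
  · -- G well defined on morphisms
    intro D D' hD hD' f hf x m hm
    have hm' : D.sig x x m = dtmk A B F D.Md x x m (A.one x) := hm
    have h1 : D.sig x x m = ∑ _j : Fin 1, dtmk A B F D.Md x x m (A.one x) := by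
      rw [Fin.sum_univ_one]; exact hm'
    have h2 := hf.compat x x m 1 (fun _ => m) (fun _ => A.one x) h1
    show D'.sig x x (f x x m) = dtmk A B F D'.Md x x (f x x m) (A.one x)
    rw [h2, Fin.sum_univ_one]
  · -- unit lands in GF(N)
    intro Nd hNd x n
    show FNsig A B F Nd x x (ftmk A B F Nd x x n (A.one x))
        = dtmk A B F (FNMod A B F Nd) x x (ftmk A B F Nd x x n (A.one x)) (A.one x)
    exact FNsig_mk A B F Nd x x n (A.one x)
  · -- unit is right B-linear
    intro Nd hNd x n b
    show ftmk A B F Nd x x (Nd.ract n b) (A.one x)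
        = ftRmul A B F Nd (F.i x b) (ftmk A B F Nd x x n (A.one x))
    rw [ftRmul_mk, A.one_mul,
      btmk_rel k (fun (n : Nd.N x) (b : B.C x) => Nd.ract n b)
        (fun (b : B.C x) (a : A.M x x) => A.mul (F.i x b) a) n b (A.one x),
      A.mul_one]
  · -- naturality of the unit
    intro Nd Nd' hNd hNd' g hg x n
    show FNMap A B F Nd Nd' g hg x x (ftmk A B F Nd x x n (A.one x))
        = ftmk A B F Nd' x x (g x n) (A.one x)
    rw [FNMap_mk]
  · -- counit is a morphism of descent data
    intro D hD
    refine ⟨⟨fun x y m m' => map_add (epsMap A B F D hD x y) m m',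
      fun x y c m => map_smul (epsMap A B F D hD x y) c m,
      fun x y z m a => epsMap_act A B F D hD a m⟩, ?_⟩
    intro x y m n m0 m1 h
    have h' : FNsig A B F (GMod A B F D hD) x y m
        = ∑ j, dtmk A B F (FNMod A B F (GMod A B F D hD)) x y (m0 j) (m1 j) := h
    show D.sig x y (epsMap A B F D hD x y m)
        = ∑ j, dtmk A B F D.Md x y (epsMap A B F D hD x x (m0 j)) (m1 j)
    rw [← PsiMap_sig A B F D hD x y m, h', map_sum]
    rfl
  · -- naturality of the counit
    intro D D' hD hD' f hf x y m hm' a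
    show f x y (D.Md.act m.1 a) = D'.Md.act (f x x m.1) a
    exact hf.mod.map_act x x y m.1 a
  · -- first triangle identity
    intro Nd hNd hFN x y n a hmem
    show ftRmul A B F Nd a (ftmk A B F Nd x x n (A.one x)) = ftmk A B F Nd x y n a
    rw [ftRmul_mk, A.one_mul]
  · -- second triangle identity
    intro D hD x m
    show D.Md.act m.1 (A.one x) = m.1
    exact hD.mod.act_one m.1

end Paper
end
end

section
/- Let i : B → A be a k-linear X-functor from a diagonal k-linear category B to a k-linear category A. Fix x, y ∈ X and assume that A_{xy} is flat as a left B_x-module. Then for every descent datum (M, σ) for i, the counit map ε^M_{xy} : G(M)_x ⊗_{B_x} A_{xy} → M_{xy}, m ⊗ a ↦ ma, is bijective, where G(M)_x = {m ∈ M_{xx} | σ_{xx}(m) = m ⊗_{B_x} 1_x}; its inverse is the corestriction of σ_{xy} to G(M)_x ⊗_{B_x} A_{xy}. -/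
open TensorProduct BigOperators
noncomputable section
namespace Paper
variable (k : Type) [CommRing k]

variable {k}
variable (k)
variable {k}

section Flat

variable {X : Type} (B : DiagAlg k X)

/-- The axioms of a right module over the `k`-algebra `B_x`. -/
def IsRModOver (x : X) (N : Type) [AddCommGroup N] [Module k N] (ρ : N → B.C x → N) : Prop :=
  (∀ n n' b, ρ (n + n') b = ρ n b + ρ n' b) ∧
  (∀ n b b', ρ n (b + b') = ρ n b + ρ n b') ∧
  (∀ (c : k) n b, ρ (c • n) b = c • ρ n b) ∧
  (∀ (c : k) n b, ρ n (c • b) = c • ρ n b) ∧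
  (∀ n b b', ρ (ρ n b) b' = ρ n (B.mul b b')) ∧
  (∀ n, ρ n (B.one x) = n)

/-- `Q` (with left `B_x`-action `lam`) is flat as a left `B_x`-module:  `- ⊗_{B_x} Q`
preserves injectivity of morphisms of right `B_x`-modules. -/
def LeftFlat (x : X) (Q : Type) [AddCommGroup Q] [Module k Q] (lam : B.C x → Q → Q) : Prop :=
  ∀ (N N' : Type) [AddCommGroup N] [Module k N] [AddCommGroup N'] [Module k N']
    (ρ : N → B.C x → N) (ρ' : N' → B.C x → N'),
    IsRModOver B x N ρ → IsRModOver B x N' ρ' →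
    ∀ (g : N →ₗ[k] N') (hg : ∀ n b, g (ρ n b) = ρ' (g n) b),
      Function.Injective g → Function.Injective (btMapLeft ρ ρ' lam g hg)

/-- `Q` is faithfully flat as a left `B_x`-module: it is flat, and `N ⊗_{B_x} Q = 0`
forces `N = 0`. -/
def LeftFaithfullyFlat (x : X) (Q : Type) [AddCommGroup Q] [Module k Q]
    (lam : B.C x → Q → Q) : Prop :=
  LeftFlat B x Q lam ∧
  ∀ (N : Type) [AddCommGroup N] [Module k N] (ρ : N → B.C x → N), IsRModOver B x N ρ →
    (∀ t : BT k ρ lam, t = 0) → ∀ n : N, n = 0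

end Flat

section Incl

variable {X : Type} (A : KCat k X) (B : DiagAlg k X) (F : XFun B A)

/-- The inclusion `G(M)_x ⊗_{B_x} A_{xy} → M_{xx} ⊗_{B_x} A_{xy}`. -/
def inclMap (D : DescData A B F) (hD : IsDesc A B F D) (x y : X) :
    FTc A B F (GMod A B F D hD) x y →ₗ[k] DTc A B F D.Md x y :=
  btMapLeft (fun (m : (GMod A B F D hD).N x) (b : B.C x) => (GMod A B F D hD).ract m b)
    (fun (m : D.Md.M x x) (b : B.C x) => D.Md.act m (F.i x b))
    (fun (b : B.C x) (a : A.M x y) => A.mul (F.i x b) a)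
    (Gsub A B F D hD x).subtype (fun n b => rfl)

end Incl

section AuxProof

variable {k : Type} [CommRing k]

/-- Two linear maps out of a balanced tensor product agree if they agree on generators. -/
theorem bt_ext {S M N P : Type} [AddCommGroup M] [Module k M] [AddCommGroup N] [Module k N]
    [AddCommGroup P] [Module k P] {ρ : M → S → M} {lam : S → N → N}
    {f g : BT k ρ lam →ₗ[k] P}
    (h : ∀ m n, f (btmk k ρ lam m n) = g (btmk k ρ lam m n)) : f = g := by
  apply Submodule.linearMap_qext
  exact TensorProduct.ext' h

/-- Every element of a balanced tensor product is a finite sum of generators. -/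
theorem bt_repr {S M N : Type} [AddCommGroup M] [Module k M] [AddCommGroup N] [Module k N]
    (ρ : M → S → M) (lam : S → N → N) (t : BT k ρ lam) :
    ∃ (n : ℕ) (m0 : Fin n → M) (m1 : Fin n → N),
      t = ∑ j, btmk k ρ lam (m0 j) (m1 j) := by
  obtain ⟨s, rfl⟩ := (relSub k ρ lam).mkQ_surjective t
  induction s using TensorProduct.induction_on with
  | zero => exact ⟨0, Fin.elim0, Fin.elim0, by simp⟩
  | tmul m n => exact ⟨1, fun _ => m, fun _ => n, by simp; rfl⟩
  | add a b ha hb =>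
      obtain ⟨n1, m0, m1, h1⟩ := ha
      obtain ⟨n2, m0', m1', h2⟩ := hb
      refine ⟨n1 + n2, Fin.append m0 m0', Fin.append m1 m1', ?_⟩
      rw [Fin.sum_univ_add]
      simp only [Fin.append_left, Fin.append_right]
      rw [← h1, ← h2, map_add]

variable {X : Type} (A : KCat k X) (B : DiagAlg k X) (F : XFun B A)

theorem dtRmul_add (Md : RModData A) {x y z : X} (a a' : A.M y z) (t : DTc A B F Md x y) :
    dtRmul A B F Md (a + a') t = dtRmul A B F Md a t + dtRmul A B F Md a' t := by
  have h : dtRmul A B F Md (a + a') =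
      dtRmul A B F Md a + dtRmul A B F Md (x := x) a' := by
    apply bt_ext
    intro m n
    simp [A.mul_add, map_add]
  rw [h]; rfl

theorem dtRmul_smul (Md : RModData A) {x y z : X} (c : k) (a : A.M y z) (t : DTc A B F Md x y) :
    dtRmul A B F Md (c • a) t = c • dtRmul A B F Md a t := by
  have h : dtRmul A B F Md (c • a) = c • dtRmul A B F Md (x := x) a := by
    apply bt_ext
    intro m n
    simp [A.mul_smul, map_smul]
  rw [h]; rfl

theorem dtRmul_comp (Md : RModData A) {x y z w : X} (a : A.M y z) (a' : A.M z w)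
    (t : DTc A B F Md x y) :
    dtRmul A B F Md a' (dtRmul A B F Md a t) = dtRmul A B F Md (A.mul a a') t := by
  have h : (dtRmul A B F Md a').comp (dtRmul A B F Md (x := x) a)
      = dtRmul A B F Md (A.mul a a') := by
    apply bt_ext
    intro m n
    simp [A.mul_assoc]
  exact DFunLike.congr_fun h t

theorem dtRmul_one (Md : RModData A) {x y : X} (t : DTc A B F Md x y) :
    dtRmul A B F Md (A.one y) t = t := by
  have h : dtRmul A B F Md (x := x) (A.one y) = LinearMap.id := by
    apply bt_ext
    intro m n
    simp [A.mul_one]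
  exact DFunLike.congr_fun h t

variable (D : DescData A B F) (hD : IsDesc A B F D) (x : X)
include hD

/-- The right `B_x`-module axioms for `M_{xx}` with action `m·b = m (i b)`. -/
theorem isRModM : IsRModOver B x (D.Md.M x x) (fun m b => D.Md.act m (F.i x b)) := by
  refine ⟨fun n n' b => hD.mod.add_act n n' _,
    fun n b b' => by show D.Md.act n (F.i x (b + b')) = _; rw [map_add, hD.mod.act_add],
    fun c n b => hD.mod.smul_act c n _,
    fun c n b => by show D.Md.act n (F.i x (c • b)) = _; rw [map_smul, hD.mod.act_smul],
    fun n b b' => by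
      show D.Md.act (D.Md.act n (F.i x b)) (F.i x b') = D.Md.act n (F.i x (B.mul b b'))
      rw [hD.mod.act_assoc, ← F.i_mul],
    fun n => by show D.Md.act n (F.i x (B.one x)) = n; rw [F.i_one, hD.mod.act_one]⟩

/-- The right `B_x`-module axioms for `G(M)_x`. -/
theorem isRModG : IsRModOver B x (↥(Gsub A B F D hD x))
    (fun m b => (GMod A B F D hD).ract m b) := by
  obtain ⟨h1, h2, h3, h4, h5, h6⟩ := isRModM A B F D hD x
  exact ⟨fun n n' b => Subtype.ext (h1 n.1 n'.1 b),
    fun n b b' => Subtype.ext (h2 n.1 b b'),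
    fun c n b => Subtype.ext (h3 c n.1 b),
    fun c n b => Subtype.ext (h4 c n.1 b),
    fun n b b' => Subtype.ext (h5 n.1 b b'),
    fun n => Subtype.ext (h6 n.1)⟩

/-- The right `B_x`-module axioms for `M_{xx} ⊗_{B_x} A_{xx}`. -/
theorem isRModP : IsRModOver B x (DTc A B F D.Md x x)
    (fun t b => dtRmul A B F D.Md (F.i x b) t) := by
  refine ⟨fun n n' b => map_add _ n n',
    fun n b b' => by
      show dtRmul A B F D.Md (F.i x (b + b')) n = _
      rw [map_add, dtRmul_add],
    fun c n b => map_smul _ c n,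
    fun c n b => by
      show dtRmul A B F D.Md (F.i x (c • b)) n = _
      rw [map_smul, dtRmul_smul],
    fun n b b' => by
      show dtRmul A B F D.Md (F.i x b') (dtRmul A B F D.Md (F.i x b) n)
        = dtRmul A B F D.Md (F.i x (B.mul b b')) n
      rw [dtRmul_comp, ← F.i_mul],
    fun n => by
      show dtRmul A B F D.Md (F.i x (B.one x)) n = n
      rw [F.i_one, dtRmul_one]⟩

/-- The map `d : M_{xx} → M_{xx} ⊗_{B_x} A_{xx}`, `m ↦ σ_{xx}(m) - m ⊗ 1`. -/
def dLin : D.Md.M x x →ₗ[k] DTc A B F D.Md x x where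
  toFun := fun m => D.sig x x m - dtmk A B F D.Md x x m (A.one x)
  map_add' := by
    intro m m'
    show D.sig x x (m + m') - dtmk A B F D.Md x x (m + m') (A.one x)
      = (D.sig x x m - dtmk A B F D.Md x x m (A.one x))
        + (D.sig x x m' - dtmk A B F D.Md x x m' (A.one x))
    rw [hD.sig_add]
    simp only [map_add, LinearMap.add_apply]
    abel
  map_smul' := by
    intro c m
    show D.sig x x (c • m) - dtmk A B F D.Md x x (c • m) (A.one x)
      = c • (D.sig x x m - dtmk A B F D.Md x x m (A.one x))
    rw [hD.sig_smul]
    simp only [map_smul, LinearMap.smul_apply, smul_sub]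

theorem dLin_equiv (m : D.Md.M x x) (b : B.C x) :
    dLin A B F D hD x (D.Md.act m (F.i x b))
      = dtRmul A B F D.Md (F.i x b) (dLin A B F D hD x m) := by
  show D.sig x x (D.Md.act m (F.i x b)) - dtmk A B F D.Md x x (D.Md.act m (F.i x b)) (A.one x)
    = dtRmul A B F D.Md (F.i x b) (D.sig x x m - dtmk A B F D.Md x x m (A.one x))
  rw [hD.c1, map_sub]
  congr 1
  rw [btmk_rel k (fun (m : D.Md.M x x) (b : B.C x) => D.Md.act m (F.i x b))
      (fun (b : B.C x) (a : A.M x x) => A.mul (F.i x b) a) m b (A.one x)]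
  rw [dtRmul_mk, A.mul_one, A.one_mul]

theorem mem_Gsub_iff (m : D.Md.M x x) :
    m ∈ Gsub A B F D hD x ↔ dLin A B F D hD x m = 0 := by
  show D.sig x x m = dtmk A B F D.Md x x m (A.one x) ↔
    D.sig x x m - dtmk A B F D.Md x x m (A.one x) = 0
  rw [sub_eq_zero]

/-- The action `m·b = m (i b)` as a linear map on `M_{xx}`. -/
def actLin (b : B.C x) : D.Md.M x x →ₗ[k] D.Md.M x x where
  toFun := fun m => D.Md.act m (F.i x b)
  map_add' := fun m m' => hD.mod.add_act m m' _
  map_smul' := fun c m => hD.mod.smul_act c m _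

theorem actLin_maps (b : B.C x) :
    Gsub A B F D hD x ≤ (Gsub A B F D hD x).comap (actLin A B F D hD x b) :=
  fun m hm => Gsub_closed A B F D hD x m hm b

/-- The induced right `B_x`-action on `M_{xx}/G(M)_x`. -/
def actQ (b : B.C x) :
    (D.Md.M x x ⧸ Gsub A B F D hD x) →ₗ[k] (D.Md.M x x ⧸ Gsub A B F D hD x) :=
  Submodule.mapQ _ _ (actLin A B F D hD x b) (actLin_maps A B F D hD x b)

theorem isRModQ : IsRModOver B x (D.Md.M x x ⧸ Gsub A B F D hD x)
    (fun n b => actQ A B F D hD x b n) := by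
  have surj := (Gsub A B F D hD x).mkQ_surjective
  refine ⟨fun n n' b => map_add _ n n', ?_, fun c n b => map_smul _ c n, ?_, ?_, ?_⟩
  · intro n b b'
    obtain ⟨m, rfl⟩ := surj n
    simp only [Submodule.mkQ_apply, actQ, Submodule.mapQ_apply, actLin,
      LinearMap.coe_mk, AddHom.coe_mk]
    rw [map_add, hD.mod.act_add, Submodule.Quotient.mk_add]
  · intro c n b
    obtain ⟨m, rfl⟩ := surj n
    simp only [Submodule.mkQ_apply, actQ, Submodule.mapQ_apply, actLin,
      LinearMap.coe_mk, AddHom.coe_mk]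
    rw [map_smul, hD.mod.act_smul, Submodule.Quotient.mk_smul]
  · intro n b b'
    obtain ⟨m, rfl⟩ := surj n
    simp only [Submodule.mkQ_apply, actQ, Submodule.mapQ_apply, actLin,
      LinearMap.coe_mk, AddHom.coe_mk]
    rw [hD.mod.act_assoc, ← F.i_mul]
  · intro n
    obtain ⟨m, rfl⟩ := surj n
    simp only [Submodule.mkQ_apply, actQ, Submodule.mapQ_apply, actLin,
      LinearMap.coe_mk, AddHom.coe_mk]
    rw [F.i_one, hD.mod.act_one]

/-- The injection `M_{xx}/G(M)_x → M_{xx} ⊗_{B_x} A_{xx}` induced by `d`. -/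
def jbar : (D.Md.M x x ⧸ Gsub A B F D hD x) →ₗ[k] DTc A B F D.Md x x :=
  (Gsub A B F D hD x).liftQ (dLin A B F D hD x)
    (fun m hm => (mem_Gsub_iff A B F D hD x m).mp hm)

theorem jbar_inj : Function.Injective (jbar A B F D hD x) := by
  rw [← LinearMap.ker_eq_bot]
  exact Submodule.ker_liftQ_eq_bot _ _ _
    (fun m hm => (mem_Gsub_iff A B F D hD x m).mpr hm)

theorem jbar_equiv (n : D.Md.M x x ⧸ Gsub A B F D hD x) (b : B.C x) :
    jbar A B F D hD x (actQ A B F D hD x b n)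
      = dtRmul A B F D.Md (F.i x b) (jbar A B F D hD x n) := by
  obtain ⟨m, rfl⟩ := (Gsub A B F D hD x).mkQ_surjective n
  simp only [Submodule.mkQ_apply, actQ, Submodule.mapQ_apply, jbar, Submodule.liftQ_apply]
  exact dLin_equiv A B F D hD x m b

end AuxProof

section MainProof

variable {k X : Type} [CommRing k] (A : KCat k X) (B : DiagAlg k X) (F : XFun B A)
variable (D : DescData A B F) (hD : IsDesc A B F D) (x y : X)

/-- The range of the inclusion `G(M)_x ⊗_{B_x} A_{xy} → M_{xx} ⊗_{B_x} A_{xy}`. -/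
def RngIncl : Submodule k (DTc A B F D.Md x y) :=
  LinearMap.range (inclMap A B F D hD x y)

/-- `q ⊗ id : M_{xx} ⊗_{B_x} A_{xy} → (M_{xx}/G) ⊗_{B_x} A_{xy}`. -/
def qT : DTc A B F D.Md x y →ₗ[k]
    BT k (fun n b => actQ A B F D hD x b n)
      (fun (b : B.C x) (a : A.M x y) => A.mul (F.i x b) a) :=
  btMapLeft (fun (m : D.Md.M x x) (b : B.C x) => D.Md.act m (F.i x b))
    (fun n b => actQ A B F D hD x b n) _
    (Gsub A B F D hD x).mkQ
    (fun m b => by simp [actQ, Submodule.mapQ_apply, actLin])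

/-- If `(q ⊗ id) t = 0` then `t` is in the range of the inclusion. -/
theorem qT_ker (t : DTc A B F D.Md x y) (ht : qT A B F D hD x y t = 0) :
    t ∈ RngIncl A B F D hD x y := by
  -- build `φ : (M/G) ⊗ A → (M ⊗ A)/Rng` with `φ ∘ qT = mkQ`
  set R := RngIncl A B F D hD x y with hR
  have hψker : ∀ m ∈ Gsub A B F D hD x,
      m ∈ LinearMap.ker ((dtmk A B F D.Md x y).compr₂ R.mkQ) := by
    intro m hm
    rw [LinearMap.mem_ker]
    apply LinearMap.ext
    intro a
    simp only [LinearMap.compr₂_apply, Submodule.mkQ_apply, LinearMap.zero_apply]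
    rw [Submodule.Quotient.mk_eq_zero]
    refine ⟨ftmk A B F (GMod A B F D hD) x y ⟨m, hm⟩ a, ?_⟩
    show btMapLeft _ _ _ _ _ _ = _
    erw [btMapLeft_mk]
  set ψ' := (Gsub A B F D hD x).liftQ ((dtmk A B F D.Md x y).compr₂ R.mkQ) hψker with hψ'
  have hcompat : ∀ (n : D.Md.M x x ⧸ Gsub A B F D hD x) (b : B.C x) (a : A.M x y),
      ψ' (actQ A B F D hD x b n) a = ψ' n (A.mul (F.i x b) a) := by
    intro n b a
    obtain ⟨m, rfl⟩ := (Gsub A B F D hD x).mkQ_surjective n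
    simp only [Submodule.mkQ_apply, actQ, Submodule.mapQ_apply, hψ', Submodule.liftQ_apply,
      LinearMap.compr₂_apply]
    congr 1
    exact btmk_rel k (fun (m : D.Md.M x x) (b : B.C x) => D.Md.act m (F.i x b))
      (fun (b : B.C x) (a : A.M x y) => A.mul (F.i x b) a) m b a
  set φ := btDesc k (fun n b => actQ A B F D hD x b n)
    (fun (b : B.C x) (a : A.M x y) => A.mul (F.i x b) a) ψ' hcompat with hφ
  have hfact : φ.comp (qT A B F D hD x y) = R.mkQ := by
    apply bt_ext
    intro m a
    simp only [LinearMap.comp_apply]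
    show φ (btmk k _ _ ((Gsub A B F D hD x).mkQ m) a) = _
    rw [hφ, btDesc_mk, hψ', Submodule.mkQ_apply, Submodule.liftQ_apply]
    rfl
  have : R.mkQ t = 0 := by
    rw [← hfact]
    simp [LinearMap.comp_apply, ht]
  rwa [Submodule.mkQ_apply, Submodule.Quotient.mk_eq_zero] at this

/-- `σ_{xy}(m)` always lies in the range of the inclusion. -/
theorem sig_mem_range
    (hflat : LeftFlat B x (A.M x y) (fun (b : B.C x) (a : A.M x y) => A.mul (F.i x b) a))
    (m : D.Md.M x y) : D.sig x y m ∈ RngIncl A B F D hD x y := by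
  -- jbarT ∘ qT = D2, and D2 (σ m) = 0 by c2
  set jbarT := btMapLeft (fun n b => actQ A B F D hD x b n)
    (fun (t : DTc A B F D.Md x x) (b : B.C x) => dtRmul A B F D.Md (F.i x b) t)
    (fun (b : B.C x) (a : A.M x y) => A.mul (F.i x b) a)
    (jbar A B F D hD x) (jbar_equiv A B F D hD x) with hjT
  have hjT_inj : Function.Injective jbarT :=
    hflat _ _ _ _ (isRModQ A B F D hD x) (isRModP A B F D hD x) _ _
      (jbar_inj A B F D hD x)
  set D2 := btMapLeft (fun (m : D.Md.M x x) (b : B.C x) => D.Md.act m (F.i x b))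
    (fun (t : DTc A B F D.Md x x) (b : B.C x) => dtRmul A B F D.Md (F.i x b) t)
    (fun (b : B.C x) (a : A.M x y) => A.mul (F.i x b) a)
    (dLin A B F D hD x) (dLin_equiv A B F D hD x) with hD2
  have hfact : jbarT.comp (qT A B F D hD x y) = D2 := by
    apply bt_ext
    intro m a
    simp only [LinearMap.comp_apply]
    show jbarT (btmk k _ _ ((Gsub A B F D hD x).mkQ m) a) = btMapLeft _ _ _ _ _ _
    rw [hjT, btMapLeft_mk, btMapLeft_mk]
    simp only [jbar, Submodule.mkQ_apply, Submodule.liftQ_apply]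
    rfl
  have hD2sig : D2 (D.sig x y m) = 0 := by
    obtain ⟨n, m0, m1, hrep⟩ := bt_repr _ _ (D.sig x y m)
    have hc2 := hD.c2 x y m n m0 m1 hrep
    rw [hrep, map_sum]
    have : ∀ j, D2 (dtmk A B F D.Md x y (m0 j) (m1 j))
        = dt2mk A B F D.Md x y (D.sig x x (m0 j)) (m1 j)
          - dt2mk A B F D.Md x y (dtmk A B F D.Md x x (m0 j) (A.one x)) (m1 j) := by
      intro j
      rw [hD2]
      show btMapLeft _ _ _ _ _ _ = _
      rw [btMapLeft_mk]
      show dt2mk A B F D.Md x y (dLin A B F D hD x (m0 j)) (m1 j) = _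
      have : dLin A B F D hD x (m0 j)
          = D.sig x x (m0 j) - dtmk A B F D.Md x x (m0 j) (A.one x) := rfl
      rw [this, map_sub, LinearMap.sub_apply]
    rw [Finset.sum_congr rfl (fun j _ => this j), Finset.sum_sub_distrib, hc2, sub_self]
  have hq0 : qT A B F D hD x y (D.sig x y m) = 0 := by
    apply hjT_inj
    rw [map_zero, ← LinearMap.comp_apply, hfact, hD2sig]
  exact qT_ker A B F D hD x y _ hq0

theorem incl_inj
    (hflat : LeftFlat B x (A.M x y) (fun (b : B.C x) (a : A.M x y) => A.mul (F.i x b) a)) :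
    Function.Injective (inclMap A B F D hD x y) :=
  hflat _ _ _ _ (isRModG A B F D hD x) (isRModM A B F D hD x)
    (Gsub A B F D hD x).subtype (fun n b => rfl) Subtype.val_injective

/-- The compatibility `σ ∘ ε = incl`. -/
theorem sig_eps (t : FTc A B F (GMod A B F D hD) x y) :
    D.sig x y (epsMap A B F D hD x y t) = inclMap A B F D hD x y t := by
  set L : FTc A B F (GMod A B F D hD) x y →ₗ[k] DTc A B F D.Md x y :=
    { toFun := fun t => D.sig x y (epsMap A B F D hD x y t)
      map_add' := fun t t' => by
        show D.sig x y (epsMap A B F D hD x y (t + t'))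
          = D.sig x y (epsMap A B F D hD x y t) + D.sig x y (epsMap A B F D hD x y t')
        rw [map_add, hD.sig_add]
      map_smul' := fun c t => by
        show D.sig x y (epsMap A B F D hD x y (c • t))
          = c • D.sig x y (epsMap A B F D hD x y t)
        rw [map_smul, hD.sig_smul] } with hL
  have : L = inclMap A B F D hD x y := by
    apply bt_ext
    intro g a
    show D.sig x y (epsMap A B F D hD x y (ftmk A B F (GMod A B F D hD) x y g a))
      = inclMap A B F D hD x y (ftmk A B F (GMod A B F D hD) x y g a)
    erw [epsMap_mk, hD.c1]
    have hg : D.sig x x g.1 = dtmk A B F D.Md x x g.1 (A.one x) := g.2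
    rw [hg, dtRmul_mk, A.one_mul]
    show _ = btMapLeft _ _ _ _ _ _
    erw [btMapLeft_mk]
    rfl
  exact DFunLike.congr_fun this t

end MainProof

/-- Proposition 2.3: if `A_{xy}` is flat as a left `B_x`-module, then for
every descent datum `(M, σ)` the counit `ε^M_{xy} : G(M)_x ⊗_{B_x} A_{xy} → M_{xy}`,
`m ⊗ a ↦ ma`, is bijective, and its inverse is the corestriction of `σ_{xy}`, i.e.
`σ_{xy} ∘ ε^M_{xy}` is the canonical inclusion `G(M)_x ⊗_{B_x} A_{xy} → M_{xx} ⊗_{B_x} A_{xy}`. -/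
theorem stmt1 {k X : Type} [CommRing k] (A : KCat k X) (B : DiagAlg k X) (F : XFun B A)
    (x y : X)
    (hflat : LeftFlat B x (A.M x y) (fun (b : B.C x) (a : A.M x y) => A.mul (F.i x b) a))
    (D : DescData A B F) (hD : IsDesc A B F D) :
    Function.Bijective (epsMap A B F D hD x y) ∧
    ∀ t : FTc A B F (GMod A B F D hD) x y,
      D.sig x y (epsMap A B F D hD x y t) = inclMap A B F D hD x y t := by
  refine ⟨⟨?_, ?_⟩, sig_eps A B F D hD x y⟩
  · -- injectivity
    intro t t' h
    apply incl_inj A B F D hD x y hflat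
    rw [← sig_eps A B F D hD x y t, ← sig_eps A B F D hD x y t', h]
  · -- surjectivity
    intro m
    obtain ⟨t, ht⟩ := sig_mem_range A B F D hD x y hflat m
    obtain ⟨n, g, a, hrep⟩ := bt_repr _ _ t
    have hincl : ∀ j, inclMap A B F D hD x y
        (ftmk A B F (GMod A B F D hD) x y (g j) (a j))
          = dtmk A B F D.Md x y (g j).1 (a j) := by
      intro j
      show btMapLeft _ _ _ _ _ _ = _
      erw [btMapLeft_mk]
    have hsig : D.sig x y m = ∑ j, dtmk A B F D.Md x y ((g j).1) (a j) := by
      rw [← ht, hrep, map_sum]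
      exact Finset.sum_congr rfl (fun j _ => hincl j)
    have hc3 := hD.c3 x y m n (fun j => (g j).1) a hsig
    refine ⟨t, ?_⟩
    rw [hrep, map_sum]
    calc ∑ j, epsMap A B F D hD x y (ftmk A B F (GMod A B F D hD) x y (g j) (a j))
        = ∑ j, D.Md.act ((g j).1) (a j) :=
          Finset.sum_congr rfl (fun j _ => epsMap_mk A B F D hD x y (g j) (a j))
      _ = m := hc3

end Paper
end
end
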